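/- Let T be a positive integer and let x : {1,...,T} → ℝ≥0 satisfy ∑_{t=1}^{T} x(t) = 1. Define X(t) = ∑_{ℓ=1}^{t} x(ℓ). Suppose C is a positive integer such that x(t) = 0 for every t > C (i.e., the job is fully scheduled by the end of time slot C). Then C ≥ 1 + ∑_{τ=1}^{T-1} (1 − X(τ)). -/
import Mathlib


open Finset

/-- Proposition 3.1: if a job with nonnegative fractional schedule `x` on slots
`1, ..., T` (summing to `1`, cumulative `X`) is fully scheduled by the end of
time slot `C`, then `C ≥ 1 + ∑_{τ=1}^{T-1} (1 - X τ)`. -/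
theorem completion_time_lower_bound
    (T : ℕ) (hT : 0 < T) (x : ℕ → ℝ)
    (hx : ∀ t ∈ Finset.Icc 1 T, 0 ≤ x t)
    (hsum : ∑ t ∈ Finset.Icc 1 T, x t = 1)
    (X : ℕ → ℝ) (hX : ∀ t, X t = ∑ ℓ ∈ Finset.Icc 1 t, x ℓ)
    (C : ℕ) (hCpos : 0 < C)
    (hC : ∀ t, C < t → x t = 0) :
    (C : ℝ) ≥ 1 + ∑ τ ∈ Finset.Icc 1 (T - 1), (1 - X τ) := by
  -- X is nonnegative on relevant range
  have hXnn : ∀ τ, τ ≤ T → 0 ≤ X τ := by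
    intro τ hτ
    rw [hX]
    apply Finset.sum_nonneg
    intro t ht
    exact hx t (Finset.mem_Icc.mpr ⟨(Finset.mem_Icc.mp ht).1,
      le_trans (Finset.mem_Icc.mp ht).2 hτ⟩)
  -- X τ = 1 for C ≤ τ ≤ T
  have hX1 : ∀ τ, C ≤ τ → τ ≤ T → X τ = 1 := by
    intro τ hCτ hτT
    have hsplit : ∑ t ∈ Finset.Icc 1 τ, x t + ∑ t ∈ Finset.Icc (τ + 1) T, x t
        = ∑ t ∈ Finset.Icc 1 T, x t := by
      rw [← Finset.sum_union]
      · congr 1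
        ext a
        simp [Finset.mem_Icc, Finset.mem_union]
        omega
      · rw [Finset.disjoint_left]
        intro a ha hb
        have := Finset.mem_Icc.mp ha
        have := Finset.mem_Icc.mp hb
        omega
    have hzero : ∑ t ∈ Finset.Icc (τ + 1) T, x t = 0 := by
      apply Finset.sum_eq_zero
      intro t ht
      exact hC t (by have := Finset.mem_Icc.mp ht; omega)
    rw [hX τ]
    have := hsum
    rw [← hsplit, hzero, add_zero] at this
    exact this
  have key : ∑ τ ∈ Finset.Icc 1 (T - 1), (1 - X τ)
      ≤ ∑ τ ∈ Finset.Icc 1 (T - 1), (if τ < C then (1 : ℝ) else 0) := by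
    apply Finset.sum_le_sum
    intro τ hτ
    have hτm := Finset.mem_Icc.mp hτ
    by_cases h : τ < C
    · simp only [if_pos h]
      have := hXnn τ (by omega)
      linarith
    · simp only [if_neg h]
      have := hX1 τ (by omega) (by omega)
      linarith
  have hcard : ∑ τ ∈ Finset.Icc 1 (T - 1), (if τ < C then (1 : ℝ) else 0)
      = ((Finset.Icc 1 (T - 1)).filter (fun τ => τ < C)).card := by
    simp [Finset.sum_boole]
  have hsub : (Finset.Icc 1 (T - 1)).filter (fun τ => τ < C) ⊆ Finset.Icc 1 (C - 1) := by
    intro τ hτ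
    have h1 := Finset.mem_Icc.mp (Finset.mem_of_mem_filter τ hτ)
    have h2 := (Finset.mem_filter.mp hτ).2
    exact Finset.mem_Icc.mpr ⟨h1.1, by omega⟩
  have hle : ((Finset.Icc 1 (T - 1)).filter (fun τ => τ < C)).card ≤ C - 1 := by
    have := Finset.card_le_card hsub
    simpa [Nat.card_Icc] using this
  have hcast : (((Finset.Icc 1 (T - 1)).filter (fun τ => τ < C)).card : ℝ) ≤ (C : ℝ) - 1 := by
    have h1 : (((Finset.Icc 1 (T - 1)).filter (fun τ => τ < C)).card : ℝ) ≤ ((C - 1 : ℕ) : ℝ) :=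
      Nat.cast_le.mpr hle
    have h2 : ((C - 1 : ℕ) : ℝ) = (C : ℝ) - 1 := by
      rw [Nat.cast_sub hCpos]; simp
    linarith
  rw [ge_iff_le]
  calc 1 + ∑ τ ∈ Finset.Icc 1 (T - 1), (1 - X τ)
      ≤ 1 + (((Finset.Icc 1 (T - 1)).filter (fun τ => τ < C)).card : ℝ) := by
        rw [← hcard]; linarith
    _ ≤ (C : ℝ) := by linarith
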